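/- For every ε > 0, all μ₁, μ₂, μ₃ ≥ 0 with μ₁ + μ₂ + μ₃ = 1, and all reals s, t, r with μ₁s + μ₂t + μ₃r = 0, the 3D Bernoulli function satisfies the splitting identity μ₃·B₃^ε(s,t,r) + μ₁·B₃^ε(t,r,s) + μ₂·B₃^ε(r,s,t) = B₃^ε(t−s, r−s, −s). (Geometrically: for a point x in a facet F_j of a tetrahedron with barycentric coordinates μ on that facet, one has B₃^ε(σ_s,σ_t,σ_r)|f_{st}| + B₃^ε(σ_t,σ_r,σ_s)|f_{tr}| + B₃^ε(σ_r,σ_s,σ_t)|f_{rs}| = |F_j|·B₃^ε(σ_{st}, σ_{sr}, −σ_s), the identity used to prove the facet degrees of freedom of S²_{1⁻}(T).) -/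

import Mathlib

set_option maxHeartbeats 1000000


open Real MeasureTheory Set intervalIntegral

/-- The 3D Bernoulli function. -/
noncomputable def B3 (ε σ₁ σ₂ σ₃ : ℝ) : ℝ :=
  ε * (2 * ∫ x₂ in (0:ℝ)..1, ∫ x₁ in (0:ℝ)..(1 - x₂),
        Real.exp ((σ₁ * x₁ + σ₂ * x₂) / ε)) /
    (6 * ∫ x₃ in (0:ℝ)..1, ∫ x₂ in (0:ℝ)..(1 - x₃), ∫ x₁ in (0:ℝ)..(1 - x₂ - x₃),
        Real.exp ((σ₁ * x₁ + σ₂ * x₂ + σ₃ * x₃) / ε))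

namespace B3Aux


/-- The open triangle. -/
def T : Set (ℝ × ℝ) := {p | 0 < p.1 ∧ 0 < p.2 ∧ p.1 + p.2 ≤ 1}

lemma measurableSet_T : MeasurableSet T := by
  have h1 : MeasurableSet {p : ℝ × ℝ | 0 < p.1} :=
    measurableSet_lt measurable_const measurable_fst
  have h2 : MeasurableSet {p : ℝ × ℝ | 0 < p.2} :=
    measurableSet_lt measurable_const measurable_snd
  have h3 : MeasurableSet {p : ℝ × ℝ | p.1 + p.2 ≤ 1} :=
    measurableSet_le (measurable_fst.add measurable_snd) measurable_const
  exact (h1.inter (h2.inter h3) : _)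

lemma integrable_ind (f : ℝ → ℝ → ℝ) (hf : Continuous fun p : ℝ × ℝ => f p.1 p.2) :
    Integrable (T.indicator fun p : ℝ × ℝ => f p.1 p.2) := by
  rw [integrable_indicator_iff measurableSet_T]
  have hsub : T ⊆ Icc ((0:ℝ), (0:ℝ)) (1, 1) := by
    rintro ⟨x, y⟩ ⟨hx, hy, hxy⟩
    simp only [Set.mem_Icc, Prod.mk_le_mk]
    exact ⟨⟨hx.le, hy.le⟩, by constructor <;> linarith⟩
  exact (hf.continuousOn.integrableOn_compact isCompact_Icc).mono_set hsub

lemma stepA (f : ℝ → ℝ → ℝ) :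
    (∫ y in (0:ℝ)..1, ∫ x in (0:ℝ)..(1 - y), f x y)
      = ∫ y : ℝ, ∫ x : ℝ, T.indicator (fun p : ℝ × ℝ => f p.1 p.2) (x, y) := by
  rw [intervalIntegral.integral_of_le zero_le_one,
    ← MeasureTheory.integral_indicator measurableSet_Ioc]
  congr 1
  funext y
  by_cases hy : y ∈ Ioc (0:ℝ) 1
  · rw [Set.indicator_of_mem hy]
    rw [intervalIntegral.integral_of_le (by linarith [hy.2] : (0:ℝ) ≤ 1 - y),
      ← MeasureTheory.integral_indicator measurableSet_Ioc]
    congr 1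
    funext x
    by_cases hx : x ∈ Ioc (0:ℝ) (1 - y)
    · rw [Set.indicator_of_mem hx, Set.indicator_of_mem]
      exact ⟨hx.1, hy.1, by linarith [hx.2]⟩
    · rw [Set.indicator_of_notMem hx, Set.indicator_of_notMem]
      intro hmem
      exact hx ⟨hmem.1, by linarith [hmem.2.2]⟩
  · rw [Set.indicator_of_notMem hy]
    have : ∀ x : ℝ, T.indicator (fun p : ℝ × ℝ => f p.1 p.2) (x, y) = 0 := by
      intro x
      apply Set.indicator_of_notMem
      intro hmem
      exact hy ⟨hmem.2.1, by linarith [hmem.1, hmem.2.2]⟩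
    simp [this]

/-- Fubini for the standard triangle. -/
lemma tf (f : ℝ → ℝ → ℝ) (hf : Continuous fun p : ℝ × ℝ => f p.1 p.2) :
    (∫ y in (0:ℝ)..1, ∫ x in (0:ℝ)..(1 - y), f x y)
      = ∫ x in (0:ℝ)..1, ∫ y in (0:ℝ)..(1 - x), f x y := by
  have hf' : Continuous fun p : ℝ × ℝ => f p.2 p.1 :=
    hf.comp continuous_swap
  rw [stepA f, stepA (fun x y => f y x)]
  have hint : Integrable (Function.uncurry fun x y =>
      T.indicator (fun p : ℝ × ℝ => f p.1 p.2) (x, y)) := by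
    have : (Function.uncurry fun x y =>
        T.indicator (fun p : ℝ × ℝ => f p.1 p.2) (x, y))
        = T.indicator (fun p : ℝ × ℝ => f p.1 p.2) := by
      funext p; cases p; rfl
    rw [this]
    exact integrable_ind f hf
  rw [← MeasureTheory.integral_integral_swap hint]
  congr 1
  funext a
  congr 1
  funext b
  show T.indicator (fun p : ℝ × ℝ => f p.1 p.2) (a, b)
      = T.indicator (fun p : ℝ × ℝ => f p.2 p.1) (b, a)
  by_cases h : (a, b) ∈ T
  · rw [Set.indicator_of_mem h, Set.indicator_of_mem]
    obtain ⟨u, v, w⟩ := h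
    exact ⟨v, u, by linarith⟩
  · rw [Set.indicator_of_notMem h, Set.indicator_of_notMem]
    intro hmem
    obtain ⟨u, v, w⟩ := hmem
    exact h ⟨v, u, by linarith⟩


noncomputable def Tri (ε a b d : ℝ) : ℝ :=
  ∫ y in (0:ℝ)..1, ∫ x in (0:ℝ)..(1 - y), Real.exp (((b - a) * x + (d - a) * y + a) / ε)

noncomputable def Tet (ε a b c d : ℝ) : ℝ :=
  ∫ z in (0:ℝ)..1, ∫ y in (0:ℝ)..(1 - z), ∫ x in (0:ℝ)..(1 - y - z),
    Real.exp (((b - a) * x + (c - a) * y + (d - a) * z + a) / ε)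


lemma scale_int (g : ℝ → ℝ) {A : ℝ} (hA : A ≠ 0) (B : ℝ) :
    (∫ x in (0:ℝ)..(A * B), g x) = A * ∫ x in (0:ℝ)..B, g (A * x) := by
  rw [intervalIntegral.integral_comp_mul_left g hA, mul_zero, smul_eq_mul,
    ← mul_assoc, mul_inv_cancel₀ hA, one_mul]

lemma scale01 (g : ℝ → ℝ) {A : ℝ} (hA : A ≠ 0) :
    (∫ x in (0:ℝ)..A, g x) = A * ∫ x in (0:ℝ)..1, g (A * x) := by
  have := scale_int g hA 1
  rwa [mul_one] at this

noncomputable def pe (k u : ℝ) : ℝ := if k = 0 then u else (Real.exp (k * u) - 1) / k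

lemma pe_eq (k u : ℝ) : (∫ x in (0:ℝ)..u, Real.exp (k * x)) = pe k u := by
  rcases eq_or_ne k 0 with h | h
  · simp [pe, h]
  · rw [pe, if_neg h, intervalIntegral.integral_comp_mul_left (fun x => Real.exp x) h,
      mul_zero, integral_exp, Real.exp_zero, smul_eq_mul]
    field_simp

lemma pe_cont (k : ℝ) : Continuous (pe k) := by
  unfold pe
  rcases eq_or_ne k 0 with h | h
  · simp only [if_pos h]
    exact continuous_id
  · simp only [if_neg h]
    fun_prop

lemma pe_pos (k : ℝ) {u : ℝ} (hu : 0 < u) : 0 < pe k u := by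
  rcases eq_or_ne k 0 with h | h
  · simpa [pe, h]
  · rw [pe, if_neg h]
    rcases lt_or_gt_of_ne h with hk | hk
    · apply div_pos_of_neg_of_neg _ hk
      have h1 : k * u < 0 := mul_neg_of_neg_of_pos hk hu
      have := Real.exp_lt_one_iff.mpr h1
      linarith
    · apply div_pos _ hk
      have h1 : 0 < k * u := mul_pos hk hu
      have := Real.one_lt_exp_iff.mpr h1
      linarith


lemma tfa (f : ℝ → ℝ → ℝ) (hf : Continuous fun p : ℝ × ℝ => f p.1 p.2) {A : ℝ} (hA : 0 ≤ A) :
    (∫ y in (0:ℝ)..A, ∫ x in (0:ℝ)..(A - y), f x y)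
      = ∫ x in (0:ℝ)..A, ∫ y in (0:ℝ)..(A - x), f x y := by
  rcases eq_or_lt_of_le hA with h | h
  · rw [← h]
    simp
  · have hA0 : A ≠ 0 := ne_of_gt h
    have inner1 : ∀ η : ℝ, (∫ x in (0:ℝ)..(A - A * η), f x (A * η))
        = A * ∫ ξ in (0:ℝ)..(1 - η), f (A * ξ) (A * η) := by
      intro η
      rw [show A - A * η = A * (1 - η) by ring]
      exact scale_int _ hA0 _
    have inner2 : ∀ ξ : ℝ, (∫ y in (0:ℝ)..(A - A * ξ), f (A * ξ) y)
        = A * ∫ η in (0:ℝ)..(1 - ξ), f (A * ξ) (A * η) := by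
      intro ξ
      rw [show A - A * ξ = A * (1 - ξ) by ring]
      exact scale_int _ hA0 _
    rw [scale01 (fun y => ∫ x in (0:ℝ)..(A - y), f x y) hA0,
      scale01 (fun x => ∫ y in (0:ℝ)..(A - x), f x y) hA0]
    simp only [inner1, inner2]
    rw [intervalIntegral.integral_const_mul, intervalIntegral.integral_const_mul]
    have hf' : Continuous fun p : ℝ × ℝ => f (A * p.1) (A * p.2) :=
      hf.comp ((continuous_const.mul continuous_fst).prodMk (continuous_const.mul continuous_snd))
    rw [tf (fun ξ η => f (A * ξ) (A * η)) hf']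





lemma Tri_swap_bd (ε a b d : ℝ) : Tri ε a b d = Tri ε a d b := by
  unfold Tri
  have h := tf (fun x y => Real.exp (((b - a) * x + (d - a) * y + a) / ε)) (by fun_prop)
  rw [h]
  apply intervalIntegral.integral_congr
  intro y _
  apply intervalIntegral.integral_congr
  intro x _
  dsimp only
  congr 1
  ring

lemma Tri_swap_ab (ε a b d : ℝ) : Tri ε a b d = Tri ε b a d := by
  unfold Tri
  apply intervalIntegral.integral_congr
  intro y _
  dsimp only
  have h := intervalIntegral.integral_comp_sub_left
    (a := (0:ℝ)) (b := 1 - y)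
    (fun x => Real.exp (((b - a) * x + (d - a) * y + a) / ε)) (1 - y)
  rw [sub_self, sub_zero] at h
  rw [← h]
  apply intervalIntegral.integral_congr
  intro x _
  dsimp only
  congr 1
  ring

lemma Tri_shift (ε a b d k : ℝ) :
    Tri ε (a + k) (b + k) (d + k) = Real.exp (k / ε) * Tri ε a b d := by
  unfold Tri
  rw [← intervalIntegral.integral_const_mul]
  apply intervalIntegral.integral_congr
  intro y _
  dsimp only
  rw [← intervalIntegral.integral_const_mul]
  apply intervalIntegral.integral_congr
  intro x _
  dsimp only
  rw [← Real.exp_add, ← add_div]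
  congr 1
  ring

lemma Tri_cevian (ε a b d l : ℝ) :
    Tri ε a b d = l * Tri ε a (a + l * (b - a)) d + (1 - l) * Tri ε (a + l * (b - a)) b d := by
  rcases eq_or_ne l 0 with h0 | h0
  · subst h0
    rw [show a + 0 * (b - a) = a by ring]
    ring
  rcases eq_or_ne l 1 with h1 | h1
  · subst h1
    rw [show a + 1 * (b - a) = b by ring]
    ring
  have hl' : (1 : ℝ) - l ≠ 0 := sub_ne_zero.mpr (Ne.symm h1)
  unfold Tri
  have key : ∀ y : ℝ,
      (∫ x in (0:ℝ)..(1 - y), Real.exp (((b - a) * x + (d - a) * y + a) / ε))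
      = l * (∫ x in (0:ℝ)..(1 - y),
          Real.exp (((a + l * (b - a) - a) * x + (d - a) * y + a) / ε))
        + (1 - l) * ∫ x in (0:ℝ)..(1 - y),
          Real.exp (((b - (a + l * (b - a))) * x + (d - (a + l * (b - a))) * y
            + (a + l * (b - a))) / ε) := by
    intro y
    set E : ℝ → ℝ := fun x => Real.exp (((b - a) * x + (d - a) * y + a) / ε) with hE
    have hsplit : (∫ x in (0:ℝ)..(1 - y), E x)
        = (∫ x in (0:ℝ)..(l * (1 - y)), E x) + ∫ x in (l * (1 - y))..(1 - y), E x := by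
      rw [intervalIntegral.integral_add_adjacent_intervals] <;>
        exact (by fun_prop : Continuous E).intervalIntegrable _ _
    have p1 : (∫ x in (0:ℝ)..(l * (1 - y)), E x)
        = l * ∫ x in (0:ℝ)..(1 - y), E (l * x) := scale_int E h0 _
    have p2 : (∫ x in (l * (1 - y))..(1 - y), E x)
        = (1 - l) * ∫ x in (0:ℝ)..(1 - y), E ((1 - l) * x + l * (1 - y)) := by
      have h := intervalIntegral.integral_comp_mul_add E hl' (l * (1 - y))
        (a := (0:ℝ)) (b := 1 - y)
      rw [mul_zero, zero_add, show (1 - l) * (1 - y) + l * (1 - y) = 1 - y by ring] at h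
      rw [h, smul_eq_mul, ← mul_assoc, mul_inv_cancel₀ hl', one_mul]
    rw [hsplit, p1, p2]
    congr 2
    · apply intervalIntegral.integral_congr
      intro x _
      simp only [hE]
      congr 1
      ring
    · apply intervalIntegral.integral_congr
      intro x _
      simp only [hE]
      congr 1
      ring
  have cp : ∀ p q c : ℝ, Continuous fun y : ℝ =>
      ∫ x in (0:ℝ)..(1 - y), Real.exp ((p * x + q * y + c) / ε) := by
    intro p q c
    apply intervalIntegral.continuous_parametric_intervalIntegral_of_continuous
    · fun_prop
    · fun_prop
  calc (∫ y in (0:ℝ)..1, ∫ x in (0:ℝ)..(1 - y),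
        Real.exp (((b - a) * x + (d - a) * y + a) / ε))
      = ∫ y in (0:ℝ)..1,
          (l * (∫ x in (0:ℝ)..(1 - y),
            Real.exp (((a + l * (b - a) - a) * x + (d - a) * y + a) / ε))
          + (1 - l) * ∫ x in (0:ℝ)..(1 - y),
            Real.exp (((b - (a + l * (b - a))) * x + (d - (a + l * (b - a))) * y
              + (a + l * (b - a))) / ε)) := by
        apply intervalIntegral.integral_congr
        intro y _
        exact key y
    _ = _ := by
        rw [intervalIntegral.integral_add, intervalIntegral.integral_const_mul,
          intervalIntegral.integral_const_mul]
        · exact (continuous_const.mul (cp _ _ _)).intervalIntegrable _ _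
        · exact (continuous_const.mul (cp _ _ _)).intervalIntegrable _ _





lemma inner_eval (ε m C u : ℝ) :
    (∫ x in (0:ℝ)..u, Real.exp ((m * x + C) / ε))
      = Real.exp (C / ε) * pe (m / ε) u := by
  have h : ∀ x : ℝ, Real.exp ((m * x + C) / ε)
      = Real.exp (C / ε) * Real.exp ((m / ε) * x) := by
    intro x
    rw [← Real.exp_add]
    congr 1
    rw [add_div, div_mul_eq_mul_div]
    exact add_comm _ _
  simp only [h]
  rw [intervalIntegral.integral_const_mul, pe_eq]

lemma Tet_swap_ab (ε a b c d : ℝ) : Tet ε a b c d = Tet ε b a c d := by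
  unfold Tet
  apply intervalIntegral.integral_congr
  intro z _
  dsimp only
  apply intervalIntegral.integral_congr
  intro y _
  dsimp only
  have h := intervalIntegral.integral_comp_sub_left
    (a := (0:ℝ)) (b := 1 - y - z)
    (fun x => Real.exp (((b - a) * x + (c - a) * y + (d - a) * z + a) / ε)) (1 - y - z)
  rw [sub_self, sub_zero] at h
  rw [← h]
  apply intervalIntegral.integral_congr
  intro x _
  dsimp only
  congr 1
  ring

lemma Tet_swap_bc (ε a b c d : ℝ) : Tet ε a b c d = Tet ε a c b d := by
  unfold Tet
  apply intervalIntegral.integral_congr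
  intro z hz
  dsimp only
  rw [Set.uIcc_of_le (by norm_num : (0:ℝ) ≤ 1)] at hz
  have hz1 : z ≤ 1 := hz.2
  have key : (∫ y in (0:ℝ)..(1 - z), ∫ x in (0:ℝ)..((1 - z) - y),
        Real.exp (((b - a) * x + (c - a) * y + (d - a) * z + a) / ε))
      = ∫ x in (0:ℝ)..(1 - z), ∫ y in (0:ℝ)..((1 - z) - x),
        Real.exp (((b - a) * x + (c - a) * y + (d - a) * z + a) / ε) :=
    tfa (fun x y => Real.exp (((b - a) * x + (c - a) * y + (d - a) * z + a) / ε))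
      (by fun_prop) (by linarith)
  have e1 : (∫ y in (0:ℝ)..(1 - z), ∫ x in (0:ℝ)..(1 - y - z),
      Real.exp (((b - a) * x + (c - a) * y + (d - a) * z + a) / ε))
      = ∫ y in (0:ℝ)..(1 - z), ∫ x in (0:ℝ)..((1 - z) - y),
      Real.exp (((b - a) * x + (c - a) * y + (d - a) * z + a) / ε) := by
    apply intervalIntegral.integral_congr
    intro y _
    dsimp only
    rw [show 1 - y - z = (1 - z) - y by ring]
  rw [e1, key]
  apply intervalIntegral.integral_congr
  intro y _
  dsimp only
  rw [show (1 - z) - y = 1 - y - z by ring]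
  apply intervalIntegral.integral_congr
  intro x _
  dsimp only
  congr 1
  ring

lemma Tet_swap_cd (ε a b c d : ℝ) : Tet ε a b c d = Tet ε a b d c := by
  unfold Tet
  have peq : ∀ (q r : ℝ) (z y : ℝ), (∫ x in (0:ℝ)..(1 - y - z),
      Real.exp (((b - a) * x + q * y + r * z + a) / ε))
      = Real.exp ((q * y + r * z + a) / ε) * pe ((b - a) / ε) (1 - y - z) := by
    intro q r z y
    rw [show (∫ x in (0:ℝ)..(1 - y - z),
        Real.exp (((b - a) * x + q * y + r * z + a) / ε))
        = ∫ x in (0:ℝ)..(1 - y - z),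
        Real.exp (((b - a) * x + (q * y + r * z + a)) / ε) from
      intervalIntegral.integral_congr (fun x _ => by congr 1; ring)]
    exact inner_eval ε (b - a) (q * y + r * z + a) (1 - y - z)
  have e1 : (∫ z in (0:ℝ)..1, ∫ y in (0:ℝ)..(1 - z), ∫ x in (0:ℝ)..(1 - y - z),
      Real.exp (((b - a) * x + (c - a) * y + (d - a) * z + a) / ε))
      = ∫ z in (0:ℝ)..1, ∫ y in (0:ℝ)..(1 - z),
        Real.exp (((c - a) * y + (d - a) * z + a) / ε) * pe ((b - a) / ε) (1 - y - z) := by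
    apply intervalIntegral.integral_congr
    intro z _
    dsimp only
    apply intervalIntegral.integral_congr
    intro y _
    exact peq (c - a) (d - a) z y
  have e2 : (∫ z in (0:ℝ)..1, ∫ y in (0:ℝ)..(1 - z), ∫ x in (0:ℝ)..(1 - y - z),
      Real.exp (((b - a) * x + (d - a) * y + (c - a) * z + a) / ε))
      = ∫ z in (0:ℝ)..1, ∫ y in (0:ℝ)..(1 - z),
        Real.exp (((d - a) * y + (c - a) * z + a) / ε) * pe ((b - a) / ε) (1 - y - z) := by
    apply intervalIntegral.integral_congr
    intro z _
    dsimp only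
    apply intervalIntegral.integral_congr
    intro y _
    exact peq (d - a) (c - a) z y
  rw [e1, e2]
  have key : (∫ z in (0:ℝ)..1, ∫ y in (0:ℝ)..(1 - z),
        Real.exp (((c - a) * y + (d - a) * z + a) / ε) * pe ((b - a) / ε) (1 - y - z))
      = ∫ y in (0:ℝ)..1, ∫ z in (0:ℝ)..(1 - y),
        Real.exp (((c - a) * y + (d - a) * z + a) / ε) * pe ((b - a) / ε) (1 - y - z) :=
    tf (fun y z => Real.exp (((c - a) * y + (d - a) * z + a) / ε)
        * pe ((b - a) / ε) (1 - y - z))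
      (by
        apply Continuous.mul
        · fun_prop
        · exact (pe_cont _).comp (by fun_prop))
  rw [key]
  apply intervalIntegral.integral_congr
  intro y _
  dsimp only
  apply intervalIntegral.integral_congr
  intro z _
  dsimp only
  rw [show 1 - y - z = 1 - z - y by ring]
  congr 2
  ring

lemma Tet_shift (ε a b c d k : ℝ) :
    Tet ε (a + k) (b + k) (c + k) (d + k) = Real.exp (k / ε) * Tet ε a b c d := by
  unfold Tet
  rw [← intervalIntegral.integral_const_mul]
  apply intervalIntegral.integral_congr
  intro z _
  dsimp only
  rw [← intervalIntegral.integral_const_mul]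
  apply intervalIntegral.integral_congr
  intro y _
  dsimp only
  rw [← intervalIntegral.integral_const_mul]
  apply intervalIntegral.integral_congr
  intro x _
  dsimp only
  rw [← Real.exp_add, ← add_div]
  congr 1
  ring

lemma Tet_pos (ε a b c d : ℝ) : 0 < Tet ε a b c d := by
  unfold Tet
  have peq : ∀ z y : ℝ, (∫ x in (0:ℝ)..(1 - y - z),
      Real.exp (((b - a) * x + (c - a) * y + (d - a) * z + a) / ε))
      = Real.exp (((c - a) * y + (d - a) * z + a) / ε) * pe ((b - a) / ε) (1 - y - z) := by
    intro z y
    rw [show (∫ x in (0:ℝ)..(1 - y - z),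
        Real.exp (((b - a) * x + (c - a) * y + (d - a) * z + a) / ε))
        = ∫ x in (0:ℝ)..(1 - y - z),
        Real.exp (((b - a) * x + ((c - a) * y + (d - a) * z + a)) / ε) from
      intervalIntegral.integral_congr (fun x _ => by congr 1; ring)]
    exact inner_eval ε (b - a) ((c - a) * y + (d - a) * z + a) (1 - y - z)
  have hGcont : Continuous fun p : ℝ × ℝ =>
      Real.exp (((c - a) * p.1 + (d - a) * p.2 + a) / ε) * pe ((b - a) / ε) (1 - p.1 - p.2) := by
    apply Continuous.mul
    · fun_prop
    · exact (pe_cont _).comp (by fun_prop)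
  have e1 : (∫ z in (0:ℝ)..1, ∫ y in (0:ℝ)..(1 - z), ∫ x in (0:ℝ)..(1 - y - z),
      Real.exp (((b - a) * x + (c - a) * y + (d - a) * z + a) / ε))
      = ∫ z in (0:ℝ)..1, ∫ y in (0:ℝ)..(1 - z),
        Real.exp (((c - a) * y + (d - a) * z + a) / ε) * pe ((b - a) / ε) (1 - y - z) := by
    apply intervalIntegral.integral_congr
    intro z _
    dsimp only
    apply intervalIntegral.integral_congr
    intro y _
    exact peq z y
  rw [e1]
  have hHcont : Continuous fun z : ℝ => ∫ y in (0:ℝ)..(1 - z),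
      Real.exp (((c - a) * y + (d - a) * z + a) / ε) * pe ((b - a) / ε) (1 - y - z) := by
    have hu : Continuous (Function.uncurry fun z y : ℝ =>
        Real.exp (((c - a) * y + (d - a) * z + a) / ε) * pe ((b - a) / ε) (1 - y - z)) := by
      apply Continuous.mul
      · fun_prop
      · exact (pe_cont _).comp (by fun_prop)
    exact intervalIntegral.continuous_parametric_intervalIntegral_of_continuous hu (by fun_prop)
  apply intervalIntegral.intervalIntegral_pos_of_pos_on
    (hHcont.intervalIntegrable _ _)
  · intro z hz
    apply intervalIntegral.intervalIntegral_pos_of_pos_on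
    · exact ((hGcont.comp ((continuous_id.prodMk continuous_const))).intervalIntegrable _ _)
    · intro y hy
      apply mul_pos (Real.exp_pos _)
      apply pe_pos
      obtain ⟨hy0, hy1⟩ := hy
      obtain ⟨hz0, hz1⟩ := hz
      linarith
    · obtain ⟨hz0, hz1⟩ := hz
      linarith
  · norm_num







lemma B3_eq (ε σ₁ σ₂ σ₃ : ℝ) :
    B3 ε σ₁ σ₂ σ₃ = ε * (2 * Tri ε 0 σ₁ σ₂) / (6 * Tet ε 0 σ₁ σ₂ σ₃) := by
  have hN : (∫ x₂ in (0:ℝ)..1, ∫ x₁ in (0:ℝ)..(1 - x₂),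
      Real.exp ((σ₁ * x₁ + σ₂ * x₂) / ε)) = Tri ε 0 σ₁ σ₂ := by
    unfold Tri
    apply intervalIntegral.integral_congr
    intro y _
    dsimp only
    apply intervalIntegral.integral_congr
    intro x _
    dsimp only
    congr 1
    ring
  have hD : (∫ x₃ in (0:ℝ)..1, ∫ x₂ in (0:ℝ)..(1 - x₃), ∫ x₁ in (0:ℝ)..(1 - x₂ - x₃),
      Real.exp ((σ₁ * x₁ + σ₂ * x₂ + σ₃ * x₃) / ε)) = Tet ε 0 σ₁ σ₂ σ₃ := by
    unfold Tet
    apply intervalIntegral.integral_congr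
    intro z _
    dsimp only
    apply intervalIntegral.integral_congr
    intro y _
    dsimp only
    apply intervalIntegral.integral_congr
    intro x _
    dsimp only
    congr 1
    ring
  unfold B3
  rw [hN, hD]

-- handy permutation corollaries
lemma Tri_rot (ε a b d : ℝ) : Tri ε a b d = Tri ε d a b := by
  rw [Tri_swap_ab ε a b d, Tri_swap_bd ε b a d, Tri_swap_ab ε b d a, Tri_swap_bd ε d b a]

lemma NUM (ε μ₁ μ₂ μ₃ s t r : ℝ)
    (h1 : 0 ≤ μ₁) (h2 : 0 ≤ μ₂) (h3 : 0 ≤ μ₃) (hsum : μ₁ + μ₂ + μ₃ = 1)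
    (hzero : μ₁ * s + μ₂ * t + μ₃ * r = 0) :
    Tri ε s t r = μ₃ * Tri ε s t 0 + μ₁ * Tri ε t r 0 + μ₂ * Tri ε r s 0 := by
  rcases eq_or_ne (μ₁ + μ₂) 0 with hν | hν
  · have hμ1 : μ₁ = 0 := by linarith [h1, h2, (by linarith : μ₁ ≤ 0)]
    have hμ2 : μ₂ = 0 := by linarith
    have hμ3 : μ₃ = 1 := by linarith
    have hr : r = 0 := by
      rw [hμ1, hμ2, hμ3] at hzero
      linarith
    rw [hμ1, hμ2, hμ3, hr]
    ring
  · set ν := μ₁ + μ₂ with hνdef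
    set l := μ₂ / ν with hldef
    set q := s + l * (t - s) with hqdef
    have hνμ3 : ν = 1 - μ₃ := by rw [hνdef]; linarith
    have hlν : l * ν = μ₂ := by
      rw [hldef]
      field_simp
    have hl1ν : (1 - l) * ν = μ₁ := by
      have : (1 - l) * ν = ν - l * ν := by ring
      rw [this, hlν, hνdef]
      ring
    have hq0 : q + μ₃ * (r - q) = 0 := by
      have hqν : q * ν = μ₁ * s + μ₂ * t := by
        rw [hqdef, hldef]
        field_simp
        ring
      have h1μ3 : 1 - μ₃ = ν := hνμ3.symm
      -- (1 - μ₃) * q + μ₃ * r = q * ν + μ₃ * r = -μ₃ r + μ₃ r = 0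
      have : q + μ₃ * (r - q) = (1 - μ₃) * q + μ₃ * r := by ring
      rw [this, h1μ3, mul_comm ν q, hqν]
      linarith
    have key1 : Tri ε s t r = l * Tri ε s q r + (1 - l) * Tri ε q t r := by
      have := Tri_cevian ε s t r l
      rwa [← hqdef] at this
    have key2 : Tri ε s q r = μ₃ * Tri ε q 0 s + ν * Tri ε 0 r s := by
      have h0 : Tri ε s q r = Tri ε q r s := by rw [Tri_swap_ab, Tri_swap_bd]
      have hc := Tri_cevian ε q r s μ₃
      rw [show q + μ₃ * (r - q) = 0 from hq0] at hc
      rw [h0, hc, hνμ3]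
    have key3 : Tri ε q t r = μ₃ * Tri ε q 0 t + ν * Tri ε 0 r t := by
      have h0 : Tri ε q t r = Tri ε q r t := Tri_swap_bd ε q t r
      have hc := Tri_cevian ε q r t μ₃
      rw [show q + μ₃ * (r - q) = 0 from hq0] at hc
      rw [h0, hc, hνμ3]
    have key4 : Tri ε s t 0 = l * Tri ε s q 0 + (1 - l) * Tri ε q t 0 := by
      have := Tri_cevian ε s t 0 l
      rwa [← hqdef] at this
    have sym1 : Tri ε q 0 s = Tri ε s q 0 := by rw [Tri_rot]
    have sym2 : Tri ε q 0 t = Tri ε q t 0 := Tri_swap_bd ε q 0 t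
    have sym3 : Tri ε 0 r s = Tri ε r s 0 := by rw [Tri_rot ε r s 0]
    have sym4 : Tri ε 0 r t = Tri ε t r 0 := by
      rw [Tri_swap_bd ε 0 r t, Tri_swap_ab, Tri_swap_bd]
    rw [key1, key2, key3, key4, sym1, sym2, sym3, sym4]
    linear_combination (Tri ε r s 0) * hlν + (Tri ε t r 0) * hl1ν

end B3Aux

open B3Aux in
/-- **Splitting identity of the 3D Bernoulli function.**
For `ε > 0`, `μ₁, μ₂, μ₃ ≥ 0` with `μ₁ + μ₂ + μ₃ = 1` and `s, t, r` with
`μ₁s + μ₂t + μ₃r = 0`: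
`μ₃·B₃^ε(s,t,r) + μ₁·B₃^ε(t,r,s) + μ₂·B₃^ε(r,s,t) = B₃^ε(t−s, r−s, −s)` —
the identity used to prove the facet degrees of freedom of `S²_{1⁻}(T)`. -/
theorem B3_splitting (ε : ℝ) (hε : 0 < ε) (μ₁ μ₂ μ₃ : ℝ)
    (h1 : 0 ≤ μ₁) (h2 : 0 ≤ μ₂) (h3 : 0 ≤ μ₃) (hsum : μ₁ + μ₂ + μ₃ = 1)
    (s t r : ℝ) (hzero : μ₁ * s + μ₂ * t + μ₃ * r = 0) :
    μ₃ * B3 ε s t r + μ₁ * B3 ε t r s + μ₂ * B3 ε r s t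
      = B3 ε (t - s) (r - s) (-s) := by
  have hεne : ε ≠ 0 := ne_of_gt hε
  rw [B3_eq, B3_eq, B3_eq, B3_eq]
  have hD1 : Tet ε 0 t r s = Tet ε 0 s t r := by
    rw [Tet_swap_cd ε 0 t r s, Tet_swap_bc ε 0 t s r]
  have hD2 : Tet ε 0 r s t = Tet ε 0 s t r := by
    rw [Tet_swap_bc ε 0 r s t, Tet_swap_cd ε 0 s r t]
  have hD3 : Tet ε 0 (t - s) (r - s) (-s) = Real.exp (-s / ε) * Tet ε 0 s t r := by
    have h := Tet_shift ε s t r 0 (-s)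
    rw [show s + -s = (0:ℝ) by ring, show t + -s = t - s by ring,
      show r + -s = r - s by ring, show (0:ℝ) + -s = -s by ring] at h
    rw [h]
    congr 1
    rw [Tet_swap_cd ε s t r 0, Tet_swap_bc ε s t 0 r, Tet_swap_ab ε s 0 t r]
  have hN1 : Tri ε 0 s t = Tri ε s t 0 := (Tri_rot ε s t 0).symm
  have hN2 : Tri ε 0 t r = Tri ε t r 0 := (Tri_rot ε t r 0).symm
  have hN3 : Tri ε 0 r s = Tri ε r s 0 := (Tri_rot ε r s 0).symm
  have hN4 : Tri ε 0 (t - s) (r - s) = Real.exp (-s / ε) * Tri ε s t r := by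
    have h := Tri_shift ε s t r (-s)
    rw [show s + -s = (0:ℝ) by ring, show t + -s = t - s by ring,
      show r + -s = r - s by ring] at h
    exact h
  have hnum := NUM ε μ₁ μ₂ μ₃ s t r h1 h2 h3 hsum hzero
  rw [hD1, hD2, hD3, hN1, hN2, hN3, hN4, hnum]
  have hDne : Tet ε 0 s t r ≠ 0 := ne_of_gt (Tet_pos ε 0 s t r)
  have hexp : Real.exp (-s / ε) ≠ 0 := Real.exp_ne_zero _
  field_simp
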